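/- arXiv:1209.6447 — 2 statements merged into one kernel-verified Lean document; each statement's English description precedes it below -/
import Mathlib

section
/- Let G be a finite group, H ≤ G a subgroup, and χ an irreducible complex character of H. Suppose H' ⊆ H satisfies H' ∩ Ker(χ) = ∅ and χ^G(g) = 0 for some g ∈ G. Then there exists an irreducible constituent φ' of χ^G such that ({g} ∪ H') ∩ Ker(φ') = ∅. -/
open scoped BigOperators
open Classical

noncomputable section

/-- `χ : G → ℂ` is a character of `G` (trace of a f.d. complex representation). -/
def IsChar (G : Type) [Group G] (χ : G → ℂ) : Prop :=
  ∃ V : FDRep ℂ G, ∀ g, V.character g = χ g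

/-- `χ : G → ℂ` is an irreducible character. -/
def IsIrrChar (G : Type) [Group G] (χ : G → ℂ) : Prop :=
  ∃ V : FDRep ℂ G, CategoryTheory.Simple V ∧ ∀ g, V.character g = χ g

/-- The induced character `χ^G(g) = (1/|H|) ∑_{t ∈ G} χ°(t g t⁻¹)`. -/
def inducedChar {G : Type} [Group G] (H : Subgroup G) (χ : H → ℂ) : G → ℂ :=
  fun g => (Nat.card H : ℂ)⁻¹ *
    ∑ᶠ t : G, if h : t * g * t⁻¹ ∈ H then χ ⟨t * g * t⁻¹, h⟩ else 0

/-- Standard inner product of class functions on a finite group. -/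
def innerChar (G : Type) [Group G] (f g : G → ℂ) : ℂ :=
  (Nat.card G : ℂ)⁻¹ * ∑ᶠ x : G, f x * (starRingEnd ℂ) (g x)

open Module LinearMap CategoryTheory Polynomial

lemma eig_core {V : Type} [AddCommGroup V] [Module ℂ V] [FiniteDimensional ℂ V]
    (f : Module.End ℂ V) (n : ℕ) (hn : 0 < n) (hf : f ^ n = 1) :
    ∃ (S : Finset ℂ) (d : ℂ → ℕ),
      (∀ μ ∈ S, μ ^ n = 1) ∧ (∀ μ ∈ S, 0 < d μ) ∧
      (∀ k : ℕ, LinearMap.trace ℂ V (f ^ k) = ∑ μ ∈ S, (d μ : ℂ) * μ ^ k) ∧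
      ((∀ μ ∈ S, μ = 1) → f = 1) := by
  have haev : aeval f ((X : ℂ[X]) ^ n - 1) = 0 := by
    simp [map_pow, hf]
  have hsq : Squarefree ((X : ℂ[X]) ^ n - 1) := by
    have := (Polynomial.separable_X_pow_sub_C (1 : ℂ)
      (Nat.cast_ne_zero.2 hn.ne') one_ne_zero).squarefree
    simpa using this
  have hss : f.IsSemisimple :=
    Module.End.isSemisimple_of_squarefree_aeval_eq_zero hsq haev
  have htop : ⨆ μ, f.eigenspace μ = ⊤ := by
    have h1 := Module.End.iSup_maxGenEigenspace_eq_top f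
    simp_rw [hss.isFinitelySemisimple.maxGenEigenspace_eq_eigenspace] at h1
    exact h1
  have hind : iSupIndep f.eigenspace := f.eigenspaces_iSupIndep
  have hfin : {μ : ℂ | f.eigenspace μ ≠ ⊥}.Finite := by
    have : Fintype {μ : ℂ | f.eigenspace μ ≠ ⊥} := hind.fintypeNeBotOfFiniteDimensional
    exact Set.toFinite _
  have hInt : DirectSum.IsInternal f.eigenspace :=
    DirectSum.isInternal_submodule_of_iSupIndep_of_iSup_eq_top hind htop
  have hroot : ∀ μ : ℂ, f.eigenspace μ ≠ ⊥ → μ ^ n = 1 := by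
    intro μ hμ
    have hev : f.HasEigenvalue μ := hμ
    have h2 : (minpoly ℂ f).IsRoot μ := Module.End.isRoot_of_hasEigenvalue hev
    have h3 : minpoly ℂ f ∣ (X : ℂ[X]) ^ n - 1 := minpoly.dvd ℂ f haev
    have h4 := h2.dvd h3
    simpa [sub_eq_zero] using h4
  have hmem : ∀ (k : ℕ) (μ : ℂ) (v : V), v ∈ f.eigenspace μ → (f ^ k) v = μ ^ k • v := by
    intro k μ
    induction k with
    | zero => intro v _; simp
    | succ k ih =>
      intro v hv
      have h1 : (f ^ (k+1)) v = (f ^ k) (f v) := by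
        rw [pow_succ]; rfl
      rw [h1, Module.End.mem_eigenspace_iff.1 hv, map_smul, ih v hv, smul_smul, ← pow_succ']
  have hMaps : ∀ (k : ℕ) (μ : ℂ), Set.MapsTo (f ^ k) (f.eigenspace μ) (f.eigenspace μ) := by
    intro k μ v hv
    have : (f ^ k) v = μ ^ k • v := hmem k μ v hv
    rw [this]
    exact Submodule.smul_mem _ _ hv
  refine ⟨hfin.toFinset, fun μ => finrank ℂ (f.eigenspace μ), ?_, ?_, ?_, ?_⟩
  · intro μ hμ; exact hroot μ (by simpa using hfin.mem_toFinset.1 hμ)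
  · intro μ hμ
    have hb : f.eigenspace μ ≠ ⊥ := by simpa using hfin.mem_toFinset.1 hμ
    have : Nontrivial (f.eigenspace μ) := Submodule.nontrivial_iff_ne_bot.2 hb
    exact finrank_pos
  · intro k
    rw [LinearMap.trace_eq_sum_trace_restrict' hInt hfin (hMaps k)]
    refine Finset.sum_congr rfl fun μ _ => ?_
    have hres : (f ^ k).restrict (hMaps k μ) = (μ ^ k) • LinearMap.id := by
      refine LinearMap.ext fun v => Subtype.ext ?_
      exact hmem k μ v.1 v.2
    rw [hres, map_smul, LinearMap.trace_id, smul_eq_mul, mul_comm]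
  · intro hall
    have hle : (⊤ : Submodule ℂ V) ≤ f.eigenspace 1 := by
      rw [← htop]
      refine iSup_le fun μ => ?_
      by_cases hμ : f.eigenspace μ = ⊥
      · simp [hμ]
      · have : μ = 1 := hall μ (hfin.mem_toFinset.2 hμ)
        rw [this]
    ext v
    have : v ∈ f.eigenspace 1 := hle trivial
    have h1 := Module.End.mem_eigenspace_iff.1 this
    simpa using h1


section CharLemmas
variable {G : Type} [Group G] [Fintype G]

lemma norm_one_of_pow_eq_one {μ : ℂ} {n : ℕ} (hn : 0 < n) (h : μ ^ n = 1) : ‖μ‖ = 1 := by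
  have h1 : ‖μ‖ ^ n = 1 := by
    rw [← norm_pow, h, norm_one]
  rcases lt_trichotomy ‖μ‖ 1 with hc | hc | hc
  · exfalso
    have := pow_lt_one₀ (norm_nonneg μ) hc hn.ne'
    rw [h1] at this; exact lt_irrefl _ this
  · exact hc
  · exfalso
    have := one_lt_pow₀ hc hn.ne'
    rw [h1] at this; exact lt_irrefl _ this

lemma conj_eq_inv_of_pow_eq_one {μ : ℂ} {n : ℕ} (hn : 0 < n) (h : μ ^ n = 1) :
    (starRingEnd ℂ) μ = μ ^ (n - 1) := by
  have hnorm : ‖μ‖ = 1 := norm_one_of_pow_eq_one hn h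
  have hμ0 : μ ≠ 0 := by
    intro h0; rw [h0] at hnorm; simp at hnorm
  have hns : Complex.normSq μ = 1 := by
    rw [← Complex.sq_norm, hnorm]; norm_num
  have h2 : (starRingEnd ℂ) μ * μ = 1 := by
    rw [mul_comm, Complex.mul_conj, hns]; norm_num
  have h3 : (starRingEnd ℂ) μ = μ⁻¹ := eq_inv_of_mul_eq_one_left h2
  have h4 : μ ^ (n - 1) * μ = 1 := by
    rw [← pow_succ, Nat.sub_add_cancel hn, h]
  rw [h3, (eq_inv_of_mul_eq_one_left h4).symm]

lemma fdRep_rho_pow_orderOf (V : FDRep ℂ G) (g : G) :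
    (V.ρ g) ^ (orderOf g) = 1 := by
  rw [← map_pow, pow_orderOf_eq_one, map_one]

lemma fdRep_conj_char (V : FDRep ℂ G) (g : G) :
    (starRingEnd ℂ) (V.character g) = V.character g⁻¹ := by
  set n := orderOf g with hn
  have hnpos : 0 < n := orderOf_pos g
  obtain ⟨S, d, hroot, _, htr, _⟩ := eig_core (V.ρ g) n hnpos (fdRep_rho_pow_orderOf V g)
  have hinv : g⁻¹ = g ^ (n - 1) := by
    have : g ^ (n - 1) * g = 1 := by
      rw [← pow_succ, Nat.sub_add_cancel hnpos, pow_orderOf_eq_one]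
    exact (eq_inv_of_mul_eq_one_left this).symm
  have h1 : V.character g = LinearMap.trace ℂ V ((V.ρ g) ^ 1) := by
    rw [pow_one]; rfl
  have h2 : V.character g⁻¹ = LinearMap.trace ℂ V ((V.ρ g) ^ (n - 1)) := by
    rw [hinv, ← map_pow]; rfl
  rw [h1, h2, htr 1, htr (n - 1), map_sum]
  refine Finset.sum_congr rfl fun μ hμ => ?_
  rw [map_mul, map_natCast, pow_one, conj_eq_inv_of_pow_eq_one hnpos (hroot μ hμ)]

lemma fdRep_char_ker (V : FDRep ℂ G) (g : G)
    (h : V.character g = V.character 1) : V.ρ g = 1 := by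
  set n := orderOf g with hn
  have hnpos : 0 < n := orderOf_pos g
  obtain ⟨S, d, hroot, hdpos, htr, hone⟩ := eig_core (V.ρ g) n hnpos (fdRep_rho_pow_orderOf V g)
  apply hone
  have h1 : V.character g = ∑ μ ∈ S, (d μ : ℂ) * μ := by
    have h11 := htr 1
    simp only [pow_one] at h11
    exact h11
  have h0 : V.character 1 = ∑ μ ∈ S, (d μ : ℂ) := by
    have h00 := htr 0
    simp only [pow_zero, mul_one] at h00
    rw [FDRep.char_one, ← h00, LinearMap.trace_one]
  by_contra hcon
  push_neg at hcon
  obtain ⟨μ₀, hμ₀S, hμ₀⟩ := hcon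
  have heq : ∑ μ ∈ S, (d μ : ℝ) * μ.re = ∑ μ ∈ S, (d μ : ℝ) := by
    have := congrArg Complex.re (h1.symm.trans (h.trans h0))
    simpa [Complex.mul_re] using this
  have hlt : ∑ μ ∈ S, (d μ : ℝ) * μ.re < ∑ μ ∈ S, (d μ : ℝ) := by
    apply Finset.sum_lt_sum
    · intro μ hμ
      have hre : μ.re ≤ 1 := by
        have := Complex.abs_re_le_norm μ
        rw [norm_one_of_pow_eq_one hnpos (hroot μ hμ)] at this
        nlinarith [abs_le.1 this]
      nlinarith [(Nat.cast_pos (α := ℝ)).2 (hdpos μ hμ), (Nat.cast_nonneg (d μ) : (0:ℝ) ≤ d μ)]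
    · refine ⟨μ₀, hμ₀S, ?_⟩
      have hnorm : ‖μ₀‖ = 1 := norm_one_of_pow_eq_one hnpos (hroot μ₀ hμ₀S)
      have hre : μ₀.re < 1 := by
        have hle : μ₀.re ≤ 1 := by
          have := Complex.abs_re_le_norm μ₀
          rw [hnorm] at this
          nlinarith [abs_le.1 this]
        rcases lt_or_eq_of_le hle with h' | h'
        · exact h'
        · exfalso
          have hns : Complex.normSq μ₀ = 1 := by
            rw [← Complex.sq_norm, hnorm]; norm_num
          have him : μ₀.im = 0 := by
            have := Complex.normSq_apply μ₀
            nlinarith [this, hns, h']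
          exact hμ₀ (Complex.ext h' him)
      have := hdpos μ₀ hμ₀S
      nlinarith [(Nat.cast_pos (α := ℝ)).2 (hdpos μ₀ hμ₀S), (by exact hre : μ₀.re < 1)]
  rw [heq] at hlt; exact lt_irrefl _ hlt

end CharLemmas


section Subrep
variable {G : Type} [Group G]

/-- `p` is a `G`-invariant subspace of `V`. -/
def IsInvt (V : FDRep ℂ G) (p : Submodule ℂ V) : Prop :=
  ∀ (g : G), ∀ v ∈ p, V.ρ g v ∈ p

/-- The subrepresentation on an invariant subspace. -/
def subRep (V : FDRep ℂ G) (p : Submodule ℂ V) (hp : IsInvt V p) : FDRep ℂ G :=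
  FDRep.of
    { toFun := fun g => (V.ρ g).restrict (fun v hv => hp g v hv)
      map_one' := by
        refine LinearMap.ext fun v => Subtype.ext ?_
        simp [LinearMap.restrict_apply]
      map_mul' := fun g₁ g₂ => by
        refine LinearMap.ext fun v => Subtype.ext ?_
        simp [LinearMap.restrict_apply] }

lemma subRep_char (V : FDRep ℂ G) (p : Submodule ℂ V) (hp : IsInvt V p) (g : G) :
    (subRep V p hp).character g
      = LinearMap.trace ℂ p ((V.ρ g).restrict (fun v hv => hp g v hv)) :=
  rfl

/-- Inclusion of a subrepresentation. -/
def subRepIncl (V : FDRep ℂ G) (p : Submodule ℂ V) (hp : IsInvt V p) :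
    subRep V p hp ⟶ V where
  hom := FGModuleCat.ofHom p.subtype
  comm := fun g => by
    ext v
    rfl

lemma fdRep_hom_comm_apply {X Y : FDRep ℂ G} (f : X ⟶ Y) (g : G) (x : X) :
    f.hom (X.ρ g x) = Y.ρ g (f.hom x) :=
  congrFun (congrArg (fun (φ : X.V ⟶ Y.V) => (φ : X → Y)) (f.comm g)) x

lemma fdRep_injective_of_mono {X Y : FDRep ℂ G} (f : X ⟶ Y) [Mono f] :
    Function.Injective f.hom := by
  set K : Submodule ℂ X := LinearMap.ker f.hom.hom.hom with hK
  have hKinv : IsInvt X K := by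
    intro g v hv
    have hv' : f.hom v = 0 := hv
    have : f.hom (X.ρ g v) = 0 := by
      rw [fdRep_hom_comm_apply, hv', map_zero]
    exact this
  have hcomp : subRepIncl X K hKinv ≫ f = 0 := by
    apply Action.hom_ext
    apply FGModuleCat.hom_ext
    refine LinearMap.ext fun (v : K) => ?_
    have hv : f.hom (v : X) = 0 := v.2
    exact hv
  have hz : subRepIncl X K hKinv = 0 :=
    (Preadditive.mono_iff_cancel_zero f).1 inferInstance _ _ hcomp
  have hKbot : K = ⊥ := by
    rw [Submodule.eq_bot_iff]
    intro v hv
    have h3 := congrArg (fun (φ : Action.Hom _ _) => (φ.hom : K → X) ⟨v, hv⟩) hz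
    exact h3
  exact (LinearMap.ker_eq_bot (f := f.hom.hom.hom)).mp hKbot

lemma fdRep_mono_of_injective {X Y : FDRep ℂ G} (f : X ⟶ Y)
    (hf : Function.Injective f.hom) : Mono f := by
  constructor
  intro Z u v huv
  apply Action.hom_ext
  apply FGModuleCat.hom_ext
  refine LinearMap.ext fun z => ?_
  apply hf
  have h1 : (u ≫ f).hom z = (v ≫ f).hom z := by rw [huv]
  exact h1

/-- A nonzero invariant subspace with no proper nonzero invariant subspace gives
a simple object. -/
lemma simple_subRep (V : FDRep ℂ G) (p : Submodule ℂ V) (hp : IsInvt V p)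
    (hbot : p ≠ ⊥)
    (hmin : ∀ q : Submodule ℂ V, q ≤ p → IsInvt V q → q = ⊥ ∨ q = p) :
    Simple (subRep V p hp) := by
  constructor
  intro Y f hm
  constructor
  · intro hiso hf0
    obtain ⟨v, hvp, hv0⟩ := (Submodule.ne_bot_iff p).1 hbot
    obtain ⟨gi, hg1, hg2⟩ := hiso.out
    rw [hf0, Limits.comp_zero] at hg2
    have h4 : (0 : p) = ⟨v, hvp⟩ := by
      have h3 := congrArg (fun (φ : Action.Hom (subRep V p hp) (subRep V p hp)) =>
        (φ.hom : p → p) ⟨v, hvp⟩) hg2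
      exact h3
    exact hv0 (by simpa using (congrArg Subtype.val h4).symm)
  · intro hf0
    have hinj : Function.Injective f.hom := fdRep_injective_of_mono f
    set fl : Y →ₗ[ℂ] V := p.subtype.comp f.hom.hom.hom with hfl_def
    set r : Submodule ℂ V := LinearMap.range fl with hr
    have hrle : r ≤ p := by
      rintro x ⟨y, rfl⟩
      exact (f.hom.hom.hom y).2
    have key : ∀ (g : G) (y : Y), fl (Y.ρ g y) = V.ρ g (fl y) := by
      intro g y
      have h := fdRep_hom_comm_apply f g y
      exact congrArg (fun (x : p) => (x : V)) h
    have hrinv : IsInvt V r := by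
      rintro g x ⟨y, rfl⟩
      exact ⟨Y.ρ g y, key g y⟩
    have hrbot : r ≠ ⊥ := by
      intro hrb
      apply hf0
      apply Action.hom_ext
      apply FGModuleCat.hom_ext
      refine LinearMap.ext fun y => ?_
      have h1 : fl y ∈ r := ⟨y, rfl⟩
      rw [hrb, Submodule.mem_bot] at h1
      exact Subtype.ext h1
    have hrp : r = p := (hmin r hrle hrinv).resolve_left hrbot
    have hsurj : Function.Surjective f.hom.hom.hom := by
      intro w
      have hw : ((show p from w) : V) ∈ r := by rw [hrp]; exact (show p from w).2
      obtain ⟨y, hy⟩ := hw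
      exact ⟨y, Subtype.ext hy⟩
    set e : Y ≃ₗ[ℂ] p := LinearEquiv.ofBijective f.hom.hom.hom ⟨hinj, hsurj⟩ with he
    have hcomm : ∀ (g : G) (x : p),
        e.symm ((subRep V p hp).ρ g x) = Y.ρ g (e.symm x) := by
      intro g x
      apply hinj
      show f.hom _ = f.hom _
      have h1 : f.hom (e.symm ((subRep V p hp).ρ g x)) = (subRep V p hp).ρ g x :=
        e.apply_symm_apply _
      have h2 : f.hom (Y.ρ g (e.symm x)) = (subRep V p hp).ρ g (f.hom (e.symm x)) :=
        fdRep_hom_comm_apply f g _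
      have h3 : f.hom (e.symm x) = x := e.apply_symm_apply x
      rw [h1, h2, h3]
    refine ⟨⟨{ hom := FGModuleCat.ofHom e.symm.toLinearMap, comm := ?_ }, ?_, ?_⟩⟩
    · intro g
      apply FGModuleCat.hom_ext
      refine LinearMap.ext fun x => ?_
      exact hcomm g x
    · apply Action.hom_ext
      apply FGModuleCat.hom_ext
      refine LinearMap.ext fun y => ?_
      show e.symm (f.hom y) = y
      exact e.symm_apply_apply y
    · apply Action.hom_ext
      apply FGModuleCat.hom_ext
      refine LinearMap.ext fun x => ?_
      show f.hom (e.symm x) = x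
      exact e.apply_symm_apply x

end Subrep


section P4
variable {G : Type} [Group G]

/-- Maschke: an equivariant projection onto an invariant subspace. -/
lemma exists_equivariant_proj [Fintype G] (V : FDRep ℂ G) (p : Submodule ℂ V)
    (hp : IsInvt V p) :
    ∃ π : V →ₗ[ℂ] V, (∀ x ∈ p, π x = x) ∧ (∀ x, π x ∈ p) ∧
      ∀ (g : G) (x : V), π (V.ρ g x) = V.ρ g (π x) := by
  obtain ⟨q, hq⟩ := Submodule.exists_isCompl p
  set π₀ : V →ₗ[ℂ] V := p.subtype.comp (p.projectionOnto q hq) with hπ₀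
  have hπ₀p : ∀ x ∈ p, π₀ x = x := by
    intro x hx
    simp [hπ₀, Submodule.projectionOnto_apply_left hq ⟨x, hx⟩]
  have hπ₀mem : ∀ x, π₀ x ∈ p := fun x => (p.projectionOnto q hq x).2
  set c : ℂ := (Fintype.card G : ℂ)⁻¹ with hc
  set π : V →ₗ[ℂ] V := c • ∑ g : G, (V.ρ g) ∘ₗ π₀ ∘ₗ (V.ρ g⁻¹) with hπ
  have hcard : (Fintype.card G : ℂ) ≠ 0 := Nat.cast_ne_zero.2 Fintype.card_ne_zero
  have happ : ∀ x, π x = c • ∑ g : G, V.ρ g (π₀ (V.ρ g⁻¹ x)) := by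
    intro x
    simp [hπ, LinearMap.sum_apply]
  refine ⟨π, ?_, ?_, ?_⟩
  · intro x hx
    rw [happ]
    have : ∀ g : G, V.ρ g (π₀ (V.ρ g⁻¹ x)) = x := by
      intro g
      rw [hπ₀p _ (hp g⁻¹ x hx)]
      have : V.ρ g (V.ρ g⁻¹ x) = V.ρ (g * g⁻¹) x := by
        rw [map_mul]; rfl
      rw [this, mul_inv_cancel, map_one]; rfl
    simp only [this, Finset.sum_const, Finset.card_univ]
    rw [← Nat.cast_smul_eq_nsmul ℂ, smul_smul, hc, inv_mul_cancel₀ hcard, one_smul]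
  · intro x
    rw [happ]
    refine Submodule.smul_mem _ _ (Submodule.sum_mem _ fun g _ => ?_)
    exact hp g _ (hπ₀mem _)
  · intro h x
    rw [happ, happ, map_smul]
    congr 1
    rw [map_sum]
    refine (Fintype.sum_equiv (Equiv.mulLeft h)
      (fun g => V.ρ h (V.ρ g (π₀ (V.ρ g⁻¹ x))))
      (fun g => V.ρ g (π₀ (V.ρ g⁻¹ (V.ρ h x)))) fun g => ?_).symm
    have h1 : V.ρ (h * g)⁻¹ (V.ρ h x) = V.ρ g⁻¹ x := by
      have : V.ρ (h * g)⁻¹ (V.ρ h x) = V.ρ ((h * g)⁻¹ * h) x := by rw [map_mul]; rfl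
      rw [this, mul_inv_rev, mul_assoc, inv_mul_cancel, mul_one]
    have h2 : V.ρ (h * g) (π₀ (V.ρ g⁻¹ x)) = V.ρ h (V.ρ g (π₀ (V.ρ g⁻¹ x))) := by
      rw [map_mul]; rfl
    show V.ρ h (V.ρ g (π₀ (V.ρ g⁻¹ x))) = V.ρ (h * g) (π₀ (V.ρ (h * g)⁻¹ (V.ρ h x)))
    rw [h1, h2]

/-- Every nonzero invariant subspace contains a minimal one. -/
lemma exists_minimal_invt (V : FDRep ℂ G) :
    ∀ (N : ℕ) (p : Submodule ℂ V), finrank ℂ p ≤ N → IsInvt V p → p ≠ ⊥ →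
    ∃ s : Submodule ℂ V, s ≤ p ∧ IsInvt V s ∧ s ≠ ⊥ ∧
      (∀ q : Submodule ℂ V, q ≤ s → IsInvt V q → q = ⊥ ∨ q = s) := by
  intro N
  induction N with
  | zero =>
    intro p hle _ hbot
    exfalso
    exact hbot (Submodule.finrank_eq_zero.1 (Nat.le_zero.1 hle))
  | succ N ih =>
    intro p hle hinv hbot
    by_cases hex : ∃ q : Submodule ℂ V, q < p ∧ IsInvt V q ∧ q ≠ ⊥
    · obtain ⟨q, hqp, hqi, hqb⟩ := hex
      have hq : finrank ℂ q ≤ N := by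
        have := Submodule.finrank_lt_finrank_of_lt hqp
        omega
      obtain ⟨s, hs1, hs2, hs3, hs4⟩ := ih q hq hqi hqb
      exact ⟨s, hs1.trans hqp.le, hs2, hs3, hs4⟩
    · push_neg at hex
      refine ⟨p, le_rfl, hinv, hbot, fun q hq hqi => ?_⟩
      rcases eq_or_lt_of_le hq with h | h
      · exact Or.inr h
      · by_cases hqb : q = ⊥
        · exact Or.inl hqb
        · exact Or.inl (hex q h hqi)

/-- Every invariant subspace is spanned by minimal (simple) invariant subspaces. -/
lemma exists_simple_span [Fintype G] (V : FDRep ℂ G) :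
    ∀ (N : ℕ) (p : Submodule ℂ V), finrank ℂ p ≤ N → IsInvt V p →
    ∃ L : List (Submodule ℂ V),
      (∀ s ∈ L, IsInvt V s ∧ s ≠ ⊥ ∧
        (∀ q : Submodule ℂ V, q ≤ s → IsInvt V q → q = ⊥ ∨ q = s)) ∧
      p ≤ L.foldr (· ⊔ ·) ⊥ := by
  intro N
  induction N with
  | zero =>
    intro p hle _
    refine ⟨[], by simp, ?_⟩
    have : p = ⊥ := Submodule.finrank_eq_zero.1 (Nat.le_zero.1 hle)
    simp [this]
  | succ N ih =>
    intro p hle hinv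
    by_cases hbot : p = ⊥
    · exact ⟨[], by simp, by simp [hbot]⟩
    · obtain ⟨s, hsp, hsinv, hsbot, hsmin⟩ :=
        exists_minimal_invt V (N + 1) p hle hinv hbot
      obtain ⟨π, hπfix, hπmem, hπcomm⟩ := exists_equivariant_proj V s hsinv
      set q : Submodule ℂ V := LinearMap.ker π ⊓ p with hqdef
      have hqinv : IsInvt V q := by
        intro g v hv
        obtain ⟨hv1, hv2⟩ := Submodule.mem_inf.1 hv
        refine Submodule.mem_inf.2 ⟨?_, hinv g v hv2⟩
        refine LinearMap.mem_ker.2 ?_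
        rw [hπcomm g v, LinearMap.mem_ker.1 hv1, map_zero]
      have hqp : q ≤ p := inf_le_right
      have hqlt : q < p := by
        refine lt_of_le_of_ne hqp ?_
        intro hqe
        obtain ⟨w, hws, hw0⟩ := (Submodule.ne_bot_iff s).1 hsbot
        have hwq : w ∈ q := by rw [hqe]; exact hsp hws
        have : π w = 0 := LinearMap.mem_ker.1 (Submodule.mem_inf.1 hwq).1
        rw [hπfix w hws] at this
        exact hw0 this
      have hqN : finrank ℂ q ≤ N := by
        have := Submodule.finrank_lt_finrank_of_lt hqlt
        omega
      obtain ⟨L', hL'1, hL'2⟩ := ih q hqN hqinv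
      refine ⟨s :: L', ?_, ?_⟩
      · intro t ht
        rcases List.mem_cons.1 ht with h | h
        · subst h; exact ⟨hsinv, hsbot, hsmin⟩
        · exact hL'1 t h
      · intro x hx
        have hdecomp : x = π x + (x - π x) := by abel
        have h1 : π x ∈ s := hπmem x
        have h2 : x - π x ∈ q := by
          refine Submodule.mem_inf.2 ⟨LinearMap.mem_ker.2 ?_, Submodule.sub_mem p hx (hsp h1)⟩
          rw [map_sub, hπfix _ (hπmem x), sub_self]
        have : x ∈ s ⊔ q := by
          rw [hdecomp]
          exact Submodule.add_mem_sup h1 h2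
        have hle2 : s ⊔ q ≤ (s :: L').foldr (· ⊔ ·) ⊥ := by
          show s ⊔ q ≤ s ⊔ L'.foldr (· ⊔ ·) ⊥
          exact sup_le_sup_left hL'2 s
        exact hle2 this

end P4


section P5
variable {G : Type} [Group G]

lemma innerChar_eq_sum [Fintype G] (f₁ f₂ : G → ℂ) :
    innerChar G f₁ f₂ = (Fintype.card G : ℂ)⁻¹ * ∑ x : G, f₁ x * (starRingEnd ℂ) (f₂ x) := by
  rw [innerChar, finsum_eq_sum_of_fintype, Nat.card_eq_fintype_card]

lemma innerChar_conj_symm [Fintype G] (f₁ f₂ : G → ℂ) :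
    innerChar G f₁ f₂ = (starRingEnd ℂ) (innerChar G f₂ f₁) := by
  rw [innerChar_eq_sum, innerChar_eq_sum, map_mul, map_inv₀, map_natCast, map_sum]
  congr 1
  refine Finset.sum_congr rfl fun x _ => ?_
  rw [map_mul, RingHomCompTriple.comp_apply]
  ring_nf
  rw [RingHom.id_apply]
  ring

lemma innerChar_char [Fintype G] (V W : FDRep ℂ G) :
    innerChar G V.character W.character = (finrank ℂ (W ⟶ V) : ℂ) := by
  have hcard : (Fintype.card G : ℂ) ≠ 0 := Nat.cast_ne_zero.2 Fintype.card_ne_zero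
  letI : Invertible (Fintype.card G : ℂ) := invertibleOfNonzero hcard
  rw [innerChar_eq_sum]
  have h1 : ∀ x : G, V.character x * (starRingEnd ℂ) (W.character x)
      = (FDRep.of (Representation.linHom W.ρ V.ρ)).character x := by
    intro x
    rw [fdRep_conj_char, FDRep.char_linHom, mul_comm]
  simp only [h1]
  have h2 := FDRep.average_char_eq_finrank_invariants
    (FDRep.of (Representation.linHom W.ρ V.ρ))
  rw [Nat.card_eq_fintype_card] at h2
  rw [h2]
  norm_cast
  have h3 : (FDRep.of (Representation.linHom W.ρ V.ρ)).ρ = Representation.linHom W.ρ V.ρ := rfl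
  rw [h3]
  exact (Representation.linHom.invariantsEquivFDRepHom W V).finrank_eq

lemma innerChar_irr_self [Fintype G] {f : G → ℂ} (hf : IsIrrChar G f) :
    innerChar G f f = 1 := by
  obtain ⟨V, hs, hV⟩ := hf
  have hfe : V.character = f := funext hV
  subst hfe
  haveI := hs
  rw [innerChar_char, CategoryTheory.finrank_endomorphism_simple_eq_one ℂ V]
  norm_num

lemma innerChar_irr_ne [Fintype G] {f f' : G → ℂ} (hf : IsIrrChar G f) (hf' : IsIrrChar G f')
    (hne : f ≠ f') : innerChar G f f' = 0 := by
  obtain ⟨V, hsV, hV⟩ := hf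
  obtain ⟨W, hsW, hW⟩ := hf'
  have hfe : V.character = f := funext hV
  have hfe' : W.character = f' := funext hW
  subst hfe; subst hfe'
  rw [innerChar_char]
  norm_cast
  by_contra hr
  have hpos : 0 < finrank ℂ (W ⟶ V) := Nat.pos_of_ne_zero hr
  have : Nontrivial (W ⟶ V) := Module.nontrivial_of_finrank_pos hpos
  obtain ⟨φ, hφ⟩ := exists_ne (0 : W ⟶ V)
  haveI := hsV; haveI := hsW
  haveI := CategoryTheory.isIso_of_hom_simple hφ
  exact hne (FDRep.char_iso (asIso φ)).symm

end P5


section P6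
variable {G : Type} [Group G] [Fintype G]

instance finsuppFD : FiniteDimensional ℂ (G →₀ ℂ) :=
  Module.Finite.equiv (Finsupp.linearEquivFunOnFinite ℂ ℂ G).symm

/-- The (left) regular representation. -/
def regRep (G : Type) [Group G] [Fintype G] : FDRep ℂ G :=
  FDRep.of (Representation.ofMulAction ℂ G G)

/-- The averaging operator `∑ conj (r x) • ρ x`. -/
def opOf (V : FDRep ℂ G) (r : G → ℂ) : V →ₗ[ℂ] V :=
  ∑ x : G, (starRingEnd ℂ) (r x) • (V.ρ x : (V : Type) →ₗ[ℂ] V)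

lemma opOf_apply (V : FDRep ℂ G) (r : G → ℂ) (v : V) :
    opOf V r v = ∑ x : G, (starRingEnd ℂ) (r x) • V.ρ x v := by
  simp [opOf, LinearMap.sum_apply]

lemma opOf_trace (V : FDRep ℂ G) (r : G → ℂ) :
    LinearMap.trace ℂ V (opOf V r) = ∑ x : G, (starRingEnd ℂ) (r x) * V.character x := by
  rw [opOf, map_sum]
  refine Finset.sum_congr rfl fun x _ => ?_
  rw [map_smul, smul_eq_mul]
  rfl

lemma opOf_comm (V : FDRep ℂ G) (r : G → ℂ) (hr : ∀ t x : G, r (t * x * t⁻¹) = r x)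
    (g : G) (v : V) : opOf V r (V.ρ g v) = V.ρ g (opOf V r v) := by
  rw [opOf_apply, opOf_apply, map_sum]
  simp only [map_smul]
  refine (Fintype.sum_equiv (MulAut.conj g).toEquiv
    (fun y => (starRingEnd ℂ) (r y) • V.ρ g (V.ρ y v))
    (fun x => (starRingEnd ℂ) (r x) • V.ρ x (V.ρ g v)) fun y => ?_).symm
  show (starRingEnd ℂ) (r y) • V.ρ g (V.ρ y v)
    = (starRingEnd ℂ) (r (g * y * g⁻¹)) • V.ρ (g * y * g⁻¹) (V.ρ g v)
  have e1 : V.ρ g (V.ρ y v) = V.ρ (g * y) v := by rw [map_mul]; rfl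
  have e2 : V.ρ (g * y * g⁻¹) (V.ρ g v) = V.ρ (g * y * g⁻¹ * g) v := by
    rw [map_mul V.ρ (g * y * g⁻¹) g]; rfl
  rw [hr g y, e1, e2, inv_mul_cancel_right]

lemma opOf_eq_zero_of_trace_eq_zero (X : FDRep ℂ G) [Simple X] (r : G → ℂ)
    (hr : ∀ t x : G, r (t * x * t⁻¹) = r x)
    (htr : LinearMap.trace ℂ X (opOf X r) = 0) : opOf X r = 0 := by
  set m : X ⟶ X :=
    ⟨FGModuleCat.ofHom (opOf X r), fun g => FGModuleCat.hom_ext (LinearMap.ext fun v => opOf_comm X r hr g v)⟩ with hm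
  have h1 := CategoryTheory.finrank_endomorphism_simple_eq_one ℂ X
  obtain ⟨c, hc⟩ := ((finrank_eq_one_iff_of_nonzero' (𝟙 X)
    (CategoryTheory.id_nonzero X)).mp h1) m
  have hfr : finrank ℂ X ≠ 0 := by
    intro h0
    have hsub : Subsingleton X := Module.finrank_zero_iff.1 h0
    apply CategoryTheory.id_nonzero X
    apply Action.hom_ext
    apply FGModuleCat.hom_ext
    refine LinearMap.ext fun v => @Subsingleton.elim _ hsub _ _
  have hhom : opOf X r = c • LinearMap.id := by
    have := congrArg (fun (φ : X ⟶ X) => φ.hom.hom.hom) hc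
    exact this.symm
  have htr2 : LinearMap.trace ℂ X (opOf X r) = c * finrank ℂ X := by
    rw [hhom, map_smul, LinearMap.trace_id, smul_eq_mul]
  rw [htr] at htr2
  have hc0 : c = 0 := by
    rcases mul_eq_zero.1 htr2.symm with h | h
    · exact h
    · exact absurd (Nat.cast_eq_zero.1 h) hfr
  rw [hhom, hc0, zero_smul]

lemma opOf_subRep_val (V : FDRep ℂ G) (p : Submodule ℂ V) (hp : IsInvt V p) (r : G → ℂ)
    (x : p) : p.subtype (opOf (subRep V p hp) r x) = opOf V r (p.subtype x) := by
  erw [opOf_apply, map_sum, opOf_apply]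
  refine Finset.sum_congr rfl fun y _ => ?_
  erw [map_smul]
  rfl

lemma foldr_sup_le {M : Type} [AddCommGroup M] [Module ℂ M] {K : Submodule ℂ M} :
    ∀ L : List (Submodule ℂ M), (∀ s ∈ L, s ≤ K) → L.foldr (· ⊔ ·) ⊥ ≤ K := by
  intro L
  induction L with
  | nil => intro _; exact bot_le
  | cons s L ih =>
    intro h
    exact sup_le (h s (List.mem_cons_self)) (ih fun t ht => h t (List.mem_cons_of_mem s ht))

lemma innerChar_sub_left [Fintype G] (f₁ f₂ f₃ : G → ℂ) :
    innerChar G (fun x => f₁ x - f₂ x) f₃ = innerChar G f₁ f₃ - innerChar G f₂ f₃ := by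
  rw [innerChar_eq_sum, innerChar_eq_sum, innerChar_eq_sum, ← mul_sub, ← Finset.sum_sub_distrib]
  congr 1
  refine Finset.sum_congr rfl fun x _ => ?_
  ring

lemma innerChar_sum_left [Fintype G] {ι : Type} (B : Finset ι) (c : ι → ℂ) (fs : ι → G → ℂ)
    (f₃ : G → ℂ) :
    innerChar G (fun x => ∑ i ∈ B, c i * fs i x) f₃ = ∑ i ∈ B, c i * innerChar G (fs i) f₃ := by
  rw [innerChar_eq_sum]
  have h1 : ∀ x : G, (∑ i ∈ B, c i * fs i x) * (starRingEnd ℂ) (f₃ x)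
      = ∑ i ∈ B, c i * (fs i x * (starRingEnd ℂ) (f₃ x)) := by
    intro x
    rw [Finset.sum_mul]
    exact Finset.sum_congr rfl fun i _ => by ring
  simp only [h1]
  simp only [Finset.mul_sum]
  rw [Finset.sum_comm]
  refine Finset.sum_congr rfl fun i _ => ?_
  rw [innerChar_eq_sum, Finset.mul_sum, Finset.mul_sum]
  refine Finset.sum_congr rfl fun x _ => ?_
  ring

lemma sum_mul_conj_eq [Fintype G] (f₁ f₂ : G → ℂ) :
    ∑ x : G, f₁ x * (starRingEnd ℂ) (f₂ x) = (Fintype.card G : ℂ) * innerChar G f₁ f₂ := by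
  have hcard : (Fintype.card G : ℂ) ≠ 0 := Nat.cast_ne_zero.2 Fintype.card_ne_zero
  rw [innerChar_eq_sum, ← mul_assoc, mul_inv_cancel₀ hcard, one_mul]

lemma irrChar_classfun {f : G → ℂ} (hf : IsIrrChar G f) (t x : G) : f (t * x * t⁻¹) = f x := by
  obtain ⟨V, _, hV⟩ := hf
  rw [← hV, ← hV, FDRep.char_conj]

/-- Completeness: every class function is a combination of irreducible characters. -/
lemma char_completeness (F : G → ℂ) (hF : ∀ t x : G, F (t * x * t⁻¹) = F x) :
    ∃ B : Finset (G → ℂ), (∀ f ∈ B, IsIrrChar G f) ∧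
      ∀ x : G, F x = ∑ f ∈ B, innerChar G F f * f x := by
  have hcard : (Fintype.card G : ℂ) ≠ 0 := Nat.cast_ne_zero.2 Fintype.card_ne_zero
  set R : FDRep ℂ G := regRep G with hR
  obtain ⟨L, hL, hLtop⟩ := exists_simple_span R (finrank ℂ (⊤ : Submodule ℂ R)) ⊤ le_rfl
    (fun g v _ => Submodule.mem_top)
  set B : Finset (G → ℂ) :=
    (L.attach.map (fun s => (subRep R s.1 (hL s.1 s.2).1).character)).toFinset with hB
  have hBirr : ∀ f ∈ B, IsIrrChar G f := by
    intro f hf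
    rw [hB, List.mem_toFinset, List.mem_map] at hf
    obtain ⟨s, _, rfl⟩ := hf
    exact ⟨subRep R s.1 (hL s.1 s.2).1,
      simple_subRep R s.1 (hL s.1 s.2).1 (hL s.1 s.2).2.1 (hL s.1 s.2).2.2, fun g => rfl⟩
  refine ⟨B, hBirr, ?_⟩
  set r : G → ℂ := fun x => F x - ∑ f ∈ B, innerChar G F f * f x with hr_def
  have hrclass : ∀ t x : G, r (t * x * t⁻¹) = r x := by
    intro t x
    simp only [hr_def]
    rw [hF t x]
    congr 1
    refine Finset.sum_congr rfl fun f hf => ?_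
    rw [irrChar_classfun (hBirr f hf) t x]
  have horthB : ∀ f₀ ∈ B, innerChar G r f₀ = 0 := by
    intro f₀ hf₀
    have h1 : innerChar G r f₀
        = innerChar G F f₀ - ∑ f ∈ B, innerChar G F f * innerChar G f f₀ := by
      rw [hr_def]
      rw [innerChar_sub_left, innerChar_sum_left]
    rw [h1]
    have h2 : ∑ f ∈ B, innerChar G F f * innerChar G f f₀ = innerChar G F f₀ := by
      have h3 : ∀ f ∈ B, innerChar G F f * innerChar G f f₀
          = if f = f₀ then innerChar G F f else 0 := by
        intro f hf
        by_cases he : f = f₀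
        · rw [he, innerChar_irr_self (hBirr f₀ hf₀), mul_one, if_pos rfl]
        · rw [innerChar_irr_ne (hBirr f hf) (hBirr f₀ hf₀) he, mul_zero, if_neg he]
      rw [Finset.sum_congr rfl h3, Finset.sum_ite_eq' B f₀ (fun f => innerChar G F f),
        if_pos hf₀]
    rw [h2, sub_self]
  -- the operator vanishes on each simple piece
  have hker : ∀ s ∈ L, s ≤ LinearMap.ker (opOf R r) := by
    intro s hs
    have hp := (hL s hs).1
    haveI : Simple (subRep R s hp) :=
      simple_subRep R s hp (hL s hs).2.1 (hL s hs).2.2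
    have hchar : (subRep R s hp).character ∈ B := by
      rw [hB, List.mem_toFinset, List.mem_map]
      exact ⟨⟨s, hs⟩, List.mem_attach _ _, rfl⟩
    have htr : LinearMap.trace ℂ (subRep R s hp) (opOf (subRep R s hp) r) = 0 := by
      rw [opOf_trace]
      have h4 : ∀ x : G, (starRingEnd ℂ) (r x) * (subRep R s hp).character x
          = (starRingEnd ℂ) (r x * (starRingEnd ℂ) ((subRep R s hp).character x)) := by
        intro x
        rw [map_mul]
        simp
      rw [Finset.sum_congr rfl (fun x _ => h4 x), ← map_sum,
        sum_mul_conj_eq, horthB _ hchar, mul_zero, map_zero]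
    have hop0 : opOf (subRep R s hp) r = 0 :=
      opOf_eq_zero_of_trace_eq_zero (subRep R s hp) r hrclass htr
    intro v hv
    rw [LinearMap.mem_ker]
    have h5 := opOf_subRep_val R s hp r ⟨v, hv⟩
    rw [hop0] at h5
    exact h5.symm
  have hopz : opOf R r = 0 := by
    refine LinearMap.ext fun v => ?_
    have hv : v ∈ LinearMap.ker (opOf R r) :=
      (foldr_sup_le L hker) (hLtop (Submodule.mem_top))
    simpa using LinearMap.mem_ker.1 hv
  -- evaluate at `single 1 1`
  have hsingle : ∀ x : G, R.ρ x (MonoidAlgebra.single (1 : G) (1 : ℂ)) = MonoidAlgebra.single x 1 := by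
    intro x
    show Representation.ofMulAction ℂ G G x (MonoidAlgebra.single 1 1) = _
    rw [Representation.ofMulAction_single]
    congr 1
    simp
  have hr0 : ∀ y : G, r y = 0 := by
    intro y
    have h1 : opOf R r (MonoidAlgebra.single (1 : G) (1 : ℂ)) = 0 := by rw [hopz]; rfl
    erw [opOf_apply] at h1
    simp only [hsingle] at h1
    have h2 := congrArg (fun (φ : MonoidAlgebra ℂ G) => φ.coeff y) h1
    have h2' : ∑ x : G, ((starRingEnd ℂ) (r x) • (MonoidAlgebra.single x 1 : MonoidAlgebra ℂ G).coeff) y = 0 := by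
      rw [← Finsupp.finset_sum_apply]
      have e : (∑ x : G, (starRingEnd ℂ) (r x) • (MonoidAlgebra.single x 1 : MonoidAlgebra ℂ G)).coeff y
          = (0 : MonoidAlgebra ℂ G).coeff y := h2
      rw [MonoidAlgebra.coeff_sum] at e
      simpa using e
    simp only [Finsupp.smul_apply, MonoidAlgebra.coeff_single, Finsupp.single_apply, smul_eq_mul,
      mul_ite, mul_one, mul_zero] at h2'
    rw [Finset.sum_ite_eq' Finset.univ y] at h2'
    rw [if_pos (Finset.mem_univ y)] at h2'
    have h2 := h2'
    have : (starRingEnd ℂ) (r y) = 0 := h2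
    have h3 : star (r y) = 0 := this
    exact star_eq_zero.1 h3
  intro x
  have := hr0 x
  rw [hr_def] at this
  exact sub_eq_zero.1 this

end P6

section P7
variable {G : Type} [Group G] [Fintype G]

/-- Restriction of a representation to a subgroup. -/
def resRep (H : Subgroup G) (V : FDRep ℂ G) : FDRep ℂ H :=
  FDRep.of (MonoidHom.comp (V.ρ) H.subtype)

lemma resRep_char (H : Subgroup G) (V : FDRep ℂ G) (h : H) :
    (resRep H V).character h = V.character (h : G) := rfl

lemma simple_finrank_ne_zero {G' : Type} [Group G'] (X : FDRep ℂ G') [Simple X] :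
    finrank ℂ X ≠ 0 := by
  intro h0
  have hsub : Subsingleton X := Module.finrank_zero_iff.1 h0
  apply CategoryTheory.id_nonzero X
  apply Action.hom_ext
  apply FGModuleCat.hom_ext
  refine LinearMap.ext fun v => @Subsingleton.elim _ hsub _ _

lemma inducedChar_eq_sum (H : Subgroup G) (χ : H → ℂ) (g : G) :
    inducedChar H χ g = (Fintype.card H : ℂ)⁻¹ *
      ∑ t : G, if h : t * g * t⁻¹ ∈ H then χ ⟨t * g * t⁻¹, h⟩ else 0 := by
  rw [inducedChar, finsum_eq_sum_of_fintype, Nat.card_eq_fintype_card]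

lemma sum_dite_subgroup (H : Subgroup G) (F : H → ℂ) :
    ∑ y : G, (if hy : y ∈ H then F ⟨y, hy⟩ else 0) = ∑ h : H, F h := by
  rw [← Finset.sum_filter_add_sum_filter_not Finset.univ (· ∈ H)
    (fun y => if hy : y ∈ H then F ⟨y, hy⟩ else 0)]
  have h2 : ∑ y ∈ Finset.univ.filter (¬ · ∈ H), (if hy : y ∈ H then F ⟨y, hy⟩ else 0) = 0 := by
    refine Finset.sum_eq_zero fun y hy => ?_
    rw [Finset.mem_filter] at hy
    exact dif_neg hy.2
  rw [h2, add_zero]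
  rw [Finset.sum_subtype (p := fun x => x ∈ H) (Finset.univ.filter (· ∈ H)) (fun x => by simp)
    (fun y => if hy : y ∈ H then F ⟨y, hy⟩ else 0)]
  refine Finset.sum_congr rfl fun x _ => ?_
  rw [dif_pos x.2]

lemma inducedChar_classfun (H : Subgroup G) (χ : H → ℂ) (t x : G) :
    inducedChar H χ (t * x * t⁻¹) = inducedChar H χ x := by
  rw [inducedChar_eq_sum, inducedChar_eq_sum]
  congr 1
  refine Fintype.sum_equiv (Equiv.mulRight t)
    (fun s => if h : s * (t * x * t⁻¹) * s⁻¹ ∈ H then χ ⟨s * (t * x * t⁻¹) * s⁻¹, h⟩ else 0)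
    (fun s => if h : s * x * s⁻¹ ∈ H then χ ⟨s * x * s⁻¹, h⟩ else 0) fun s => ?_
  simp only [Equiv.coe_mulRight]
  have he : s * (t * x * t⁻¹) * s⁻¹ = (s * t) * x * (s * t)⁻¹ := by group
  rw [he]
  rfl

lemma inducedChar_one (H : Subgroup G) (χ : H → ℂ) :
    inducedChar H χ 1 = (Fintype.card H : ℂ)⁻¹ * (Fintype.card G : ℂ) * χ 1 := by
  rw [inducedChar_eq_sum]
  have h1 : ∀ t : G, (if h : t * 1 * t⁻¹ ∈ H then χ ⟨t * 1 * t⁻¹, h⟩ else 0) = χ 1 := by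
    intro t
    have ht : t * 1 * t⁻¹ = 1 := by group
    rw [dif_pos (by rw [ht]; exact one_mem H)]
    congr 1
    exact Subtype.ext ht
  rw [Finset.sum_congr rfl fun t _ => h1 t, Finset.sum_const, Finset.card_univ,
    ← Nat.cast_smul_eq_nsmul ℂ, smul_eq_mul, mul_assoc]

/-- Frobenius reciprocity. -/
lemma frobeniusRecip (H : Subgroup G) (V : FDRep ℂ G) (χ : H → ℂ) :
    innerChar G V.character (inducedChar H χ)
      = innerChar H (fun h : H => V.character (h : G)) χ := by
  have hcardG : (Fintype.card G : ℂ) ≠ 0 := Nat.cast_ne_zero.2 Fintype.card_ne_zero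
  set F : G → ℂ := fun y => if hy : y ∈ H then V.character y * (starRingEnd ℂ) (χ ⟨y, hy⟩) else 0
    with hF
  have hAB : ∀ x : G, ∑ t : G, V.character x *
        (starRingEnd ℂ) (if h : t * x * t⁻¹ ∈ H then χ ⟨t * x * t⁻¹, h⟩ else 0)
      = ∑ t : G, F (t * x * t⁻¹) := by
    intro x
    refine Finset.sum_congr rfl fun t _ => ?_
    by_cases hmem : t * x * t⁻¹ ∈ H
    · rw [dif_pos hmem, hF]
      simp only []
      rw [dif_pos hmem]
      rw [FDRep.char_conj]
    · rw [dif_neg hmem, hF]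
      simp only []
      rw [dif_neg hmem, map_zero, mul_zero]
  have claimA : ∀ x : G, V.character x * (starRingEnd ℂ) (inducedChar H χ x)
      = (Fintype.card H : ℂ)⁻¹ * ∑ t : G, F (t * x * t⁻¹) := by
    intro x
    rw [inducedChar_eq_sum, map_mul, map_inv₀, map_natCast, map_sum, ← hAB x]
    simp only [Finset.mul_sum, Finset.sum_mul]
    refine Finset.sum_congr rfl fun t _ => by ring
  have claimB : ∀ t : G, ∑ x : G, F (t * x * t⁻¹) = ∑ h : H, F h := by
    intro t
    rw [← sum_dite_subgroup H (fun h : H => F (h : G))]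
    · refine (Fintype.sum_equiv (MulAut.conj t).toEquiv (fun x => F (t * x * t⁻¹))
        (fun y => if hy : y ∈ H then F ((⟨y, hy⟩ : H) : G) else 0) fun x => ?_)
      show F (t * x * t⁻¹) = if hy : t * x * t⁻¹ ∈ H then F (t * x * t⁻¹) else 0
      by_cases hmem : t * x * t⁻¹ ∈ H
      · rw [dif_pos hmem]
      · rw [dif_neg hmem, hF]
        simp only []
        rw [dif_neg hmem]
  have hsplit : ∑ h : H, F (h : G) = ∑ h : H, V.character (h : G) * (starRingEnd ℂ) (χ h) := by
    refine Finset.sum_congr rfl fun h _ => ?_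
    rw [hF]
    simp only []
    rw [dif_pos h.2]
  rw [innerChar_eq_sum]
  have hsum : ∑ x : G, V.character x * (starRingEnd ℂ) (inducedChar H χ x)
      = (Fintype.card H : ℂ)⁻¹ * ((Fintype.card G : ℂ) *
          ∑ h : H, V.character (h : G) * (starRingEnd ℂ) (χ h)) := by
    rw [Finset.sum_congr rfl fun x _ => claimA x, ← Finset.mul_sum]
    congr 1
    rw [Finset.sum_comm]
    rw [Finset.sum_congr rfl fun t _ => claimB t]
    have := hsplit
    rw [Finset.sum_congr rfl (fun (h : H) _ => rfl), this] at *
    rw [Finset.sum_const, Finset.card_univ, ← Nat.cast_smul_eq_nsmul ℂ, smul_eq_mul]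
  have hS : ∀ S : ℂ, (Fintype.card G : ℂ)⁻¹ * ((Fintype.card H : ℂ)⁻¹ *
      ((Fintype.card G : ℂ) * S)) = (Fintype.card H : ℂ)⁻¹ * S := by
    intro S
    rw [mul_left_comm, ← mul_assoc ((Fintype.card G : ℂ))⁻¹,
      inv_mul_cancel₀ hcardG, one_mul]
  rw [hsum, innerChar_eq_sum]
  exact hS _
end P7

/-- If `H'` avoids `Ker χ` and `χ^G` vanishes at some `g ∈ G`, then there is an
irreducible constituent `φ'` of `χ^G` whose kernel avoids `{g} ∪ H'`. -/
theorem exists_irr_constituent_avoiding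
    {G : Type} [Group G] [Fintype G] (H : Subgroup G)
    (χ : H → ℂ) (hχ : IsIrrChar H χ)
    (H' : Set H) (hH' : ∀ h ∈ H', χ h ≠ χ 1)
    (g : G) (hg : inducedChar H χ g = 0) :
    ∃ φ' : G → ℂ, IsIrrChar G φ' ∧ innerChar G φ' (inducedChar H χ) ≠ 0 ∧
      φ' g ≠ φ' 1 ∧ ∀ h ∈ H', φ' (h : G) ≠ φ' 1 := by
  obtain ⟨W, hsW, hWχ⟩ := hχ
  haveI := hsW
  obtain ⟨B, hBirr, hdecomp⟩ := char_completeness (inducedChar H χ)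
    (fun t x => inducedChar_classfun H χ t x)
  have hχ1 : χ 1 ≠ 0 := by
    rw [← hWχ 1, FDRep.char_one]
    exact_mod_cast simple_finrank_ne_zero W
  have hone : inducedChar H χ 1 ≠ 0 := by
    rw [inducedChar_one]
    have hH0 : (Fintype.card H : ℂ) ≠ 0 := Nat.cast_ne_zero.2 Fintype.card_ne_zero
    have hG0 : (Fintype.card G : ℂ) ≠ 0 := Nat.cast_ne_zero.2 Fintype.card_ne_zero
    exact mul_ne_zero (mul_ne_zero (inv_ne_zero hH0) hG0) hχ1
  have h2 : ∃ f ∈ B, innerChar G (inducedChar H χ) f ≠ 0 ∧ f g ≠ f 1 := by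
    by_contra hcon
    push_neg at hcon
    have heq : inducedChar H χ g = inducedChar H χ 1 := by
      rw [hdecomp g, hdecomp 1]
      refine Finset.sum_congr rfl fun f hf => ?_
      by_cases hz : innerChar G (inducedChar H χ) f = 0
      · rw [hz, zero_mul, zero_mul]
      · rw [hcon f hf hz]
    exact hone (heq.symm.trans hg)
  obtain ⟨φ', hφ'B, hφ'c, hφ'g⟩ := h2
  have hmain : innerChar G φ' (inducedChar H χ) ≠ 0 := by
    rw [innerChar_conj_symm]
    intro h0
    exact hφ'c (star_eq_zero.1 h0)
  refine ⟨φ', hBirr φ' hφ'B, hmain, hφ'g, ?_⟩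
  intro h hh hcontra
  obtain ⟨V', hsV', hV'φ⟩ := hBirr φ' hφ'B
  haveI := hsV'
  have hkerV : V'.ρ (h : G) = 1 := by
    apply fdRep_char_ker
    rw [hV'φ, hV'φ]
    exact hcontra
  have hφfun : V'.character = φ' := funext hV'φ
  have hresne : innerChar H (fun hh : H => V'.character (hh : G)) χ ≠ 0 := by
    rw [← frobeniusRecip H V' χ, hφfun]
    exact hmain
  have hres2 : innerChar H (resRep H V').character W.character ≠ 0 := by
    have e2 : W.character = χ := funext hWχ
    rw [e2]
    exact hresne
  rw [innerChar_char] at hres2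
  have hfr : finrank ℂ (W ⟶ resRep H V') ≠ 0 := fun hz => hres2 (by rw [hz]; norm_num)
  have : Nontrivial (W ⟶ resRep H V') :=
    Module.nontrivial_of_finrank_pos (Nat.pos_of_ne_zero hfr)
  obtain ⟨φm, hφm⟩ := exists_ne (0 : W ⟶ resRep H V')
  haveI : Mono φm := CategoryTheory.mono_of_nonzero_from_simple hφm
  have hinj := fdRep_injective_of_mono φm
  have hWh : W.ρ h = W.ρ 1 := by
    rw [map_one]
    refine LinearMap.ext fun w => ?_
    apply hinj
    rw [fdRep_hom_comm_apply φm h w]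
    have e3 : (resRep H V').ρ h (φm.hom w) = V'.ρ (h : G) (φm.hom w) := rfl
    rw [e3, hkerV]
    rfl
  have hχh : χ h = χ 1 := by
    rw [← hWχ h, ← hWχ 1]
    exact congrArg (LinearMap.trace ℂ W) hWh
  exact hH' h hh hχh
end
end

section
/- Let G be a finite abelian group that can be generated by three elements, one of which has order 2, and suppose G contains a subgroup isomorphic to ℤ/2 × ℤ/2. Then there exist positive integers m, n such that G is isomorphic to ℤ/2m × ℤ/2mn or to ℤ/2 × ℤ/2m × ℤ/2mn. -/
set_option maxHeartbeats 1000000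

namespace ATGC

/-- Transport `ZMod` along an equality. -/
def zmodCongr {a b : ℕ} (h : a = b) : ZMod a ≃+ ZMod b := by subst h; exact AddEquiv.refl _

/-- Additive version of `Equiv.piEquivPiSubtypeProd`. -/
def piSplit {ι : Type*} (q : ι → Prop) [DecidablePred q] (X : ι → Type*)
    [∀ i, AddZeroClass (X i)] :
    (∀ i, X i) ≃+ (∀ i : {x // q x}, X i.1) × (∀ i : {x // ¬ q x}, X i.1) :=
  AddEquiv.mk' (Equiv.piEquivPiSubtypeProd q X) (fun _ _ => rfl)

/-- Additive version of `Equiv.piCongrLeft'`. -/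
def piReindex {α β : Type*} (e : α ≃ β) (X : α → Type*) [∀ i, AddZeroClass (X i)] :
    (∀ a, X a) ≃+ ∀ b, X (e.symm b) :=
  AddEquiv.mk' (Equiv.piCongrLeft' X e) (fun _ _ => rfl)

/-- Additive version of `Equiv.piCurry`. -/
def piCurryAdd {α : Type*} {δ : α → Type*} (X : (a : α) → δ a → Type*)
    [∀ a d, AddZeroClass (X a d)] :
    (∀ x : Σ a, δ a, X x.1 x.2) ≃+ ∀ a, ∀ d, X a d :=
  AddEquiv.mk' (Equiv.piCurry X) (fun _ _ => rfl)

/-- Additive version of `Equiv.piComm`. -/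
def piCommAdd {α β : Type*} (X : α → β → Type*) [∀ a b, AddZeroClass (X a b)] :
    (∀ a, ∀ b, X a b) ≃+ ∀ b, ∀ a, X a b :=
  AddEquiv.mk' (Equiv.piComm X) (fun _ _ => rfl)

/-- Split off the first three components. -/
def piFin3 (X : Fin 3 → Type*) [∀ j, AddZeroClass (X j)] :
    (∀ j, X j) ≃+ X 0 × X 1 × X 2 :=
  AddEquiv.mk'
    { toFun := fun f => (f 0, f 1, f 2)
      invFun := fun t => Fin.cons t.1 (Fin.cons t.2.1 (Fin.cons t.2.2 finZeroElim))
      left_inv := by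
        intro f
        funext j
        match j with
        | ⟨0, _⟩ => rfl
        | ⟨1, _⟩ => rfl
        | ⟨2, _⟩ => rfl
      right_inv := fun t => rfl }
    (fun _ _ => rfl)

/-- Regroup a product over the fibers of `f`. -/
def piFiber {α β : Type*} (f : α → β) (X : α → Type*) [∀ a, AddZeroClass (X a)] :
    (∀ a, X a) ≃+ ∀ b, ∀ i : {a // f a = b}, X i.1 :=
  AddEquiv.mk'
    { toFun := fun g b i => g i.1
      invFun := fun h a => h (f a) ⟨a, rfl⟩
      left_inv := fun g => rfl
      right_inv := by
        intro h
        funext b i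
        rcases i with ⟨a, rfl⟩
        rfl }
    (fun _ _ => rfl)

lemma zmod_val_inj {N : ℕ} [NeZero N] {a b : ZMod N} (h : a.val = b.val) : a = b := by
  rw [← a.natCast_zmod_val, ← b.natCast_zmod_val, h]

lemma range_pair {V : Type*} (x y : V) : Set.range ![x, y] = {x, y} := by
  ext v
  constructor
  · rintro ⟨j, rfl⟩
    fin_cases j <;> simp
  · intro h
    simp only [Set.mem_insert_iff, Set.mem_singleton_iff] at h
    rcases h with rfl | rfl
    exacts [⟨0, rfl⟩, ⟨1, rfl⟩]

end ATGC
namespace ATGC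
lemma card_le_of_gen {r k : ℕ} (hr : 1 < r) {V : Type*} [AddCommGroup V] [Module (ZMod r) V]
    (v : Fin k → V) (hv : AddSubgroup.closure (Set.range v) = ⊤) : Nat.card V ≤ r ^ k := by
  have : NeZero r := ⟨by omega⟩
  have h1 : AddSubgroup.closure (Set.range v) ≤
      (Submodule.span (ZMod r) (Set.range v)).toAddSubgroup :=
    (AddSubgroup.closure_le _).2 Submodule.subset_span
  have hspan : Submodule.span (ZMod r) (Set.range v) = ⊤ := by
    rw [eq_top_iff]
    intro z _
    have : z ∈ AddSubgroup.closure (Set.range v) := hv ▸ AddSubgroup.mem_top z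
    exact (Submodule.mem_toAddSubgroup _).1 (h1 this)
  have hsurj : Function.Surjective (Fintype.linearCombination (ZMod r) v) := by
    rw [← LinearMap.range_eq_top, Fintype.range_linearCombination, hspan]
  calc Nat.card V ≤ Nat.card (Fin k → ZMod r) :=
        Nat.card_le_card_of_surjective _ hsurj
    _ = r ^ k := by simp [Nat.card_pi, Nat.card_zmod]

lemma two_nsmul_zmod_val {k : ℕ} (hk : k ≠ 0) {z : ZMod (2 ^ k)} (hz : 2 • z = 0) :
    z.val = 0 ∨ z.val = 2 ^ (k - 1) := by
  have : NeZero (2 ^ k) := ⟨by positivity⟩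
  have h1 : ((2 * z.val : ℕ) : ZMod (2 ^ k)) = 0 := by
    push_cast
    rw [ZMod.natCast_val, ZMod.cast_id, two_mul, ← two_nsmul]
    exact hz
  have h2 : 2 ^ k ∣ 2 * z.val := (ZMod.natCast_eq_zero_iff _ _).1 h1
  have hlt : z.val < 2 ^ k := ZMod.val_lt z
  obtain ⟨v, hv⟩ : ∃ v, z.val = v := ⟨_, rfl⟩
  rw [hv] at h2 hlt ⊢
  obtain ⟨k', rfl⟩ : ∃ k', k = k' + 1 := ⟨k - 1, by omega⟩
  rw [pow_succ, mul_comm (2 ^ k') 2] at h2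
  have h3 : 2 ^ k' ∣ v := (Nat.mul_dvd_mul_iff_left (by norm_num : 0 < 2)).1 h2
  obtain ⟨c, hc⟩ := h3
  rw [pow_succ] at hlt
  have hpos : 0 < 2 ^ k' := by positivity
  have hc2 : c < 2 := by
    by_contra h
    push_neg at h
    have : 2 ^ k' * 2 ≤ 2 ^ k' * c := Nat.mul_le_mul_left _ h
    omega
  interval_cases c <;> simp_all


/-- In `ZMod N` with `N` odd, `2`-torsion is trivial. -/
lemma eq_zero_of_two_nsmul_of_odd {N : ℕ} (hN : N ≠ 0) (hodd : ¬ 2 ∣ N) {z : ZMod N}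
    (hz : 2 • z = 0) : z = 0 := by
  have : NeZero N := ⟨hN⟩
  have h1 : addOrderOf z ∣ 2 := addOrderOf_dvd_of_nsmul_eq_zero hz
  have h2 : addOrderOf z ∣ N := by
    apply addOrderOf_dvd_of_nsmul_eq_zero
    rw [nsmul_eq_mul, ZMod.natCast_self, zero_mul]
  have h3 : addOrderOf z ∣ Nat.gcd 2 N := Nat.dvd_gcd h1 h2
  have h4 : Nat.gcd 2 N = 1 := by
    rcases (Nat.dvd_prime Nat.prime_two).1 (Nat.gcd_dvd_left 2 N) with h | h
    · exact h
    · exact absurd (h ▸ Nat.gcd_dvd_right 2 N) hodd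
  rw [h4, Nat.dvd_one, AddMonoid.addOrderOf_eq_one_iff] at h3
  exact h3

/-- A `2`-torsion element of `ZMod (2^k)`, `k ≥ 2`, maps to `0` in `ZMod 2`. -/
lemma cast_eq_zero_of_two_nsmul {k : ℕ} (hk : 2 ≤ k) {z : ZMod (2 ^ k)} (hz : 2 • z = 0)
    (hdvd : (2 : ℕ) ∣ 2 ^ k) :
    ZMod.castHom hdvd (ZMod 2) z = 0 := by
  have : NeZero (2 ^ k) := ⟨by positivity⟩
  have hval : z.val = 0 ∨ z.val = 2 ^ (k - 1) := two_nsmul_zmod_val (by omega) hz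
  have hz' : z = ((z.val : ℕ) : ZMod (2 ^ k)) := by rw [ZMod.natCast_val, ZMod.cast_id]
  rw [hz', map_natCast]
  rw [ZMod.natCast_eq_zero_iff]
  rcases hval with h | h <;> rw [h]
  · exact Dvd.intro 0 rfl
  · exact dvd_pow_self 2 (by omega)


/-- Sort and pad the exponents of a product of at most three cyclic `r`-groups. -/
lemma key {κ : Type} [Fintype κ] (r : ℕ) (w : κ → ℕ) (hk : Nat.card κ ≤ 3)
    (hw : ∀ i, w i ≠ 0) :
    ∃ E : Fin 3 → ℕ, Monotone E ∧
      (∀ j : Fin 3, (E j = 0 ↔ (j : ℕ) < 3 - Nat.card κ)) ∧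
      (Nat.card κ = 3 → ∀ i, E 0 ≤ w i) ∧
      Nonempty ((∀ i, ZMod (r ^ w i)) ≃+ ∀ j, ZMod (r ^ E j)) := by
  classical
  set k := Nat.card κ with hkdef
  have hkf : Fintype.card κ = k := Nat.card_eq_fintype_card.symm
  set t := 3 - k with htdef
  have ht3 : t ≤ 3 := by omega
  let ε : Fin k ≃ κ := (Fintype.equivFinOfCardEq hkf).symm
  let u : Fin k → ℕ := w ∘ ε
  let τ : Equiv.Perm (Fin k) := Tuple.sort u
  have hus : Monotone (u ∘ τ) := Tuple.monotone_sort u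
  let E : Fin 3 → ℕ := fun j =>
    if h : t ≤ (j : ℕ) then u (τ ⟨(j : ℕ) - t, by have := j.isLt; omega⟩) else 0
  have hE0 : ∀ j : Fin 3, (E j = 0 ↔ (j : ℕ) < t) := by
    intro j
    by_cases h : t ≤ (j : ℕ)
    · simp only [E, dif_pos h]
      exact ⟨fun hc => absurd hc (hw _), fun hc => by omega⟩
    · have h0 : E j = 0 := dif_neg h
      exact ⟨fun _ => by omega, fun _ => h0⟩
  refine ⟨E, ?_, hE0, ?_, ?_⟩
  · -- Monotone
    intro j j' hle
    by_cases h1 : t ≤ (j : ℕ)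
    · have h2 : t ≤ (j' : ℕ) := le_trans h1 hle
      simp only [E, dif_pos h1, dif_pos h2]
      exact hus (by simp [Fin.mk_le_mk]; omega)
    · simp only [E, dif_neg h1]
      exact Nat.zero_le _
  · -- min property
    intro hcard i
    have ht0 : t = 0 := by omega
    have h0 : E 0 = u (τ ⟨0, by omega⟩) := by
      simp only [E]
      rw [dif_pos (by omega)]
      congr 1
      apply Fin.ext
      simp
    have : w i = u (ε.symm i) := by simp [u]
    rw [h0, this]
    have : u (ε.symm i) = (u ∘ τ) (τ.symm (ε.symm i)) := by simp
    rw [this]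
    exact hus (by simp [Fin.le_def])
  · -- the equivalence
    refine ⟨?_⟩
    have e1 : (∀ i : κ, ZMod (r ^ w i)) ≃+ ∀ x : Fin k, ZMod (r ^ u x) :=
      piReindex ε.symm (fun i => ZMod (r ^ w i))
    have e2 : (∀ x : Fin k, ZMod (r ^ u x)) ≃+ ∀ x : Fin k, ZMod (r ^ u (τ x)) :=
      piReindex τ.symm (fun x => ZMod (r ^ u x))
    -- reindex `Fin k` as the subtype of `Fin 3`
    let δ : {j : Fin 3 // t ≤ (j : ℕ)} ≃ Fin k :=
      { toFun := fun j => ⟨(j.1 : ℕ) - t, by have := j.1.isLt; have := j.2; omega⟩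
        invFun := fun x => ⟨⟨t + (x : ℕ), by have := x.isLt; omega⟩, Nat.le_add_right t x⟩
        left_inv := by
          rintro ⟨j, hj⟩
          apply Subtype.ext
          apply Fin.ext
          simp
          omega
        right_inv := by
          intro x
          apply Fin.ext
          simp }
    have e3 : (∀ x : Fin k, ZMod (r ^ u (τ x))) ≃+
        ∀ j : {j : Fin 3 // t ≤ (j : ℕ)}, ZMod (r ^ u (τ (δ j))) :=
      piReindex δ.symm (fun x => ZMod (r ^ u (τ x)))
    have e4 : (∀ j : {j : Fin 3 // t ≤ (j : ℕ)}, ZMod (r ^ u (τ (δ j)))) ≃+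
        ∀ j : {j : Fin 3 // t ≤ (j : ℕ)}, ZMod (r ^ E j.1) := by
      refine AddEquiv.piCongrRight fun j => zmodCongr ?_
      have : E j.1 = u (τ (δ j)) := by
        simp only [E, dif_pos j.2]
        rfl
      rw [this]
    haveI : ∀ j : {j : Fin 3 // ¬ t ≤ (j : ℕ)}, Unique (ZMod (r ^ E j.1)) := by
      intro j
      have : r ^ E j.1 = 1 := by
        have : E j.1 = 0 := (hE0 j.1).2 (by omega)
        rw [this, pow_zero]
      exact (zmodCongr this).toEquiv.unique
    have e5 : (∀ j : Fin 3, ZMod (r ^ E j)) ≃+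
        (∀ j : {j : Fin 3 // t ≤ (j : ℕ)}, ZMod (r ^ E j.1)) ×
        (∀ j : {j : Fin 3 // ¬ t ≤ (j : ℕ)}, ZMod (r ^ E j.1)) :=
      piSplit (ι := Fin 3) (fun j => t ≤ (j : ℕ)) (fun j => ZMod (r ^ E j))
    exact e1.trans (e2.trans (e3.trans (e4.trans
      ((AddEquiv.prodUnique).symm.trans e5.symm))))

lemma range_triple {V : Type*} (x y z : V) : Set.range ![x, y, z] = {x, y, z} := by
  ext v
  constructor
  · rintro ⟨j, rfl⟩
    fin_cases j <;> simp
  · intro h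
    simp only [Set.mem_insert_iff, Set.mem_singleton_iff] at h
    rcases h with rfl | rfl | rfl
    exacts [⟨0, rfl⟩, ⟨1, rfl⟩, ⟨2, rfl⟩]

lemma closure_triple_map {M N : Type*} [AddCommGroup M] [AddCommGroup N] (g : M →+ N)
    (hg : Function.Surjective g) (a b s : M) (h : AddSubgroup.closure {a, b, s} = ⊤) :
    AddSubgroup.closure {g a, g b, g s} = ⊤ := by
  have h2 := AddMonoidHom.map_closure g {a, b, s}
  rw [h, AddSubgroup.map_top_of_surjective g hg] at h2
  rw [Set.image_insert_eq, Set.image_insert_eq, Set.image_singleton] at h2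
  exact h2.symm

theorem core {A : Type*} [AddCommGroup A] [Finite A] (a b s x y : A)
    (hgen : AddSubgroup.closure {a, b, s} = ⊤)
    (hs : 2 • s = 0)
    (hx : 2 • x = 0) (hy : 2 • y = 0) (hx0 : x ≠ 0) (hy0 : y ≠ 0) (hxy : x ≠ y) :
    ∃ m n : ℕ, 0 < m ∧ 0 < n ∧
      (Nonempty (A ≃+ ZMod (2 * m) × ZMod (2 * m * n)) ∨
       Nonempty (A ≃+ ZMod 2 × ZMod (2 * m) × ZMod (2 * m * n))) := by
  classical
  obtain ⟨ι, hι, p, hp, e, ⟨Ψ0⟩⟩ := AddCommGroup.equiv_directSum_zmod_of_finite A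
  have Ψ1 : A ≃+ ∀ i, ZMod (p i ^ e i) := Ψ0.trans (DirectSum.addEquivProd _)
  -- remove trivial components
  haveI : ∀ i : {i : ι // ¬ e i ≠ 0}, Unique (ZMod (p i.1 ^ e i.1)) := fun i =>
    (zmodCongr (show p i.1 ^ e i.1 = 1 by rw [not_not.1 i.2, pow_zero])).toEquiv.unique
  have Ψ2 : A ≃+ ∀ i : {i : ι // e i ≠ 0}, ZMod (p i.1 ^ e i.1) :=
    Ψ1.trans ((piSplit (fun i => e i ≠ 0) (fun i => ZMod (p i ^ e i))).trans
      AddEquiv.prodUnique)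
  -- the finite set of primes, always including 2
  set P : Finset ℕ := Finset.univ.image p ∪ {2} with hPdef
  have h2P : (2 : ℕ) ∈ P := by simp [hPdef]
  have hPprime : ∀ r : {r // r ∈ P}, Nat.Prime r.1 := by
    rintro ⟨r, hr⟩
    simp [hPdef] at hr
    rcases hr with rfl | ⟨i, rfl⟩
    · exact Nat.prime_two
    · exact hp i
  set r₂ : {r // r ∈ P} := ⟨2, h2P⟩ with hr₂def
  set f : {i : ι // e i ≠ 0} → {r // r ∈ P} :=
    (fun i => ⟨p i.1, by simp [hPdef]⟩) with hfdef
  have hpf : ∀ (r : {r // r ∈ P}) (i : {i // f i = r}), p i.1.1 = r.1 :=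
    fun r i => congrArg Subtype.val i.2
  have hw : ∀ (r : {r // r ∈ P}) (i : {i // f i = r}), e i.1.1 ≠ 0 := fun r i => i.1.2
  -- regroup by primes
  have Ψ3 : A ≃+ ∀ r : {r // r ∈ P}, ∀ i : {i // f i = r}, ZMod (r.1 ^ e i.1.1) := by
    refine Ψ2.trans ((piFiber f (fun i => ZMod (p i.1 ^ e i.1))).trans ?_)
    exact AddEquiv.piCongrRight fun r => AddEquiv.piCongrRight fun i =>
      zmodCongr (by rw [hpf r i])
  -- basic transported facts
  have hgen3 : AddSubgroup.closure {Ψ3 a, Ψ3 b, Ψ3 s} = ⊤ :=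
    closure_triple_map Ψ3.toAddMonoidHom Ψ3.surjective a b s hgen
  have hs3 : 2 • Ψ3 s = 0 := by rw [← map_nsmul, hs, map_zero]
  have hx3 : 2 • Ψ3 x = 0 := by rw [← map_nsmul, hx, map_zero]
  have hy3 : 2 • Ψ3 y = 0 := by rw [← map_nsmul, hy, map_zero]
  have hx30 : Ψ3 x ≠ 0 := fun h => hx0 (by simpa using Ψ3.injective (h.trans (map_zero Ψ3).symm))
  have hy30 : Ψ3 y ≠ 0 := fun h => hy0 (by simpa using Ψ3.injective (h.trans (map_zero Ψ3).symm))
  have hxy3 : Ψ3 x ≠ Ψ3 y := fun h => hxy (Ψ3.injective h)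
  -- vanishing of 2-torsion away from 2
  have vanish : ∀ z : (∀ r : {r // r ∈ P}, ∀ i : {i // f i = r}, ZMod (r.1 ^ e i.1.1)),
      2 • z = 0 → ∀ r, r ≠ r₂ → z r = 0 := by
    intro z hz r hr
    funext i
    have hzc : 2 • (z r i) = 0 := by
      have h := congrFun (congrFun hz r) i
      rwa [Pi.smul_apply, Pi.smul_apply, Pi.zero_apply] at h
    refine eq_zero_of_two_nsmul_of_odd (pow_ne_zero _ (hPprime r).pos.ne') ?_ hzc
    intro hdvd
    have h2r : (2 : ℕ) ∣ r.1 := (Nat.Prime.dvd_of_dvd_pow Nat.prime_two hdvd)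
    exact hr (Subtype.ext ((Nat.prime_dvd_prime_iff_eq Nat.prime_two (hPprime r)).1 h2r).symm)
  -- the elementary abelian quotients
  have hψ : ∀ r : {r // r ∈ P}, ∃ ψ : (∀ r : {r // r ∈ P}, ∀ i : {i // f i = r}, ZMod (r.1 ^ e i.1.1)) →+ (∀ i : {i // f i = r}, ZMod r.1),
      Function.Surjective ψ ∧
      (∀ (z : (∀ r : {r // r ∈ P}, ∀ i : {i // f i = r}, ZMod (r.1 ^ e i.1.1))) (i : {i // f i = r}), ψ z i =
        ZMod.castHom (dvd_pow_self r.1 (hw r i)) (ZMod r.1) (z r i)) := by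
    intro r
    refine ⟨AddMonoidHom.mk' (fun z i => ZMod.castHom (dvd_pow_self r.1 (hw r i))
      (ZMod r.1) (z r i)) ?_, ?_, fun z i => rfl⟩
    · intro z z'
      funext i
      exact (ZMod.castHom (dvd_pow_self r.1 (hw r i)) (ZMod r.1)).map_add (z r i) (z' r i)
    · intro v
      have hlift : ∀ i : {i // f i = r}, ∃ z : ZMod (r.1 ^ e i.1.1),
          ZMod.castHom (dvd_pow_self r.1 (hw r i)) (ZMod r.1) z = v i := by
        intro i
        obtain ⟨nn, hnn⟩ := ZMod.intCast_surjective (v i)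
        exact ⟨(nn : ZMod (r.1 ^ e i.1.1)), by rw [map_intCast, hnn]⟩
      choose u hu using hlift
      refine ⟨Function.update (0 : (∀ r : {r // r ∈ P}, ∀ i : {i // f i = r}, ZMod (r.1 ^ e i.1.1))) r u, ?_⟩
      funext i
      simpa [Function.update_self] using hu i
  choose ψ hψsurj hψapp using hψ
  -- cardinality of the elementary abelian quotients
  have hcardV : ∀ r : {r // r ∈ P},
      Nat.card (∀ i : {i // f i = r}, ZMod r.1) = r.1 ^ Nat.card {i // f i = r} := by
    intro r
    rw [Nat.card_pi]
    simp [Nat.card_zmod, Finset.prod_const, Nat.card_eq_fintype_card]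
  -- counting bounds
  have count_le3 : ∀ r : {r // r ∈ P}, Nat.card {i // f i = r} ≤ 3 := by
    intro r
    have h1 : AddSubgroup.closure {ψ r (Ψ3 a), ψ r (Ψ3 b), ψ r (Ψ3 s)} = ⊤ :=
      closure_triple_map (ψ r) (hψsurj r) _ _ _ hgen3
    have h2 : Nat.card (∀ i : {i // f i = r}, ZMod r.1) ≤ r.1 ^ 3 :=
      card_le_of_gen (hPprime r).one_lt ![ψ r (Ψ3 a), ψ r (Ψ3 b), ψ r (Ψ3 s)]
        (by rw [range_triple]; exact h1)
    rw [hcardV r] at h2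
    exact (pow_le_pow_iff_right₀ (hPprime r).one_lt).1 h2
  -- a group generated by two elements after killing `s`
  have quot_le2 : ∀ r : {r // r ∈ P}, ψ r (Ψ3 s) = 0 → Nat.card {i // f i = r} ≤ 2 := by
    intro r hψs
    have h1 : AddSubgroup.closure {ψ r (Ψ3 a), ψ r (Ψ3 b), ψ r (Ψ3 s)} = ⊤ :=
      closure_triple_map (ψ r) (hψsurj r) _ _ _ hgen3
    have h1' : AddSubgroup.closure {ψ r (Ψ3 a), ψ r (Ψ3 b)} = ⊤ := by
      rw [eq_top_iff, ← h1]
      refine (AddSubgroup.closure_le _).2 ?_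
      intro z hz
      simp only [Set.mem_insert_iff, Set.mem_singleton_iff] at hz
      rcases hz with rfl | rfl | rfl
      · exact AddSubgroup.subset_closure (by simp)
      · exact AddSubgroup.subset_closure (by simp)
      · rw [hψs]
        exact AddSubgroup.zero_mem _
    have h2 : Nat.card (∀ i : {i // f i = r}, ZMod r.1) ≤ r.1 ^ 2 := by
      refine card_le_of_gen (hPprime r).one_lt ![ψ r (Ψ3 a), ψ r (Ψ3 b)] ?_
      rw [range_pair]
      exact h1'
    rw [hcardV r] at h2
    exact (pow_le_pow_iff_right₀ (hPprime r).one_lt).1 h2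
  have count_le2 : ∀ r : {r // r ∈ P}, r ≠ r₂ → Nat.card {i // f i = r} ≤ 2 := by
    intro r hr
    refine quot_le2 r ?_
    funext i
    rw [hψapp, congrFun (vanish (Ψ3 s) hs3 r hr) i]
    simp
  -- the Klein four subgroup gives at least two factors above 2
  have count_ge2 : 2 ≤ Nat.card {i // f i = r₂} := by
    by_contra hlt
    push_neg at hlt
    set X := Ψ3 x with hXdef
    set Y := Ψ3 y with hYdef
    have hXX : X + X = 0 := by rw [← two_nsmul]; exact hx3
    have hZ : 2 • (X + Y) = 0 := by rw [smul_add, hx3, hy3, add_zero]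
    have hXY0 : X + Y ≠ 0 := by
      intro h
      refine hxy3 ?_
      have h1 : Y = -X := eq_neg_of_add_eq_zero_right h
      have h2 : -X = X := neg_eq_of_add_eq_zero_left hXX
      rw [h1, h2]
    have ext2 : ∀ z z' : (∀ r : {r // r ∈ P}, ∀ i : {i // f i = r}, ZMod (r.1 ^ e i.1.1)), 2 • z = 0 → 2 • z' = 0 → z r₂ = z' r₂ → z = z' := by
      intro z z' hz hz' hcomp
      funext r
      by_cases hr : r = r₂
      · subst hr; exact hcomp
      · rw [vanish z hz r hr, vanish z' hz' r hr]
    interval_cases hcc : (Nat.card {i // f i = r₂})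
    · -- empty fiber
      haveI : IsEmpty {i // f i = r₂} := by
        rw [Nat.card_eq_fintype_card] at hcc
        exact Fintype.card_eq_zero_iff.1 hcc
      refine hx30 (ext2 X 0 hx3 (smul_zero 2) ?_)
      funext i
      exact absurd i.2 (by exact fun _ => IsEmpty.elim ‹IsEmpty _› i)
    · -- single fiber
      have h1 : Fintype.card {i // f i = r₂} = 1 := by
        rw [← Nat.card_eq_fintype_card, hcc]
      obtain ⟨i0, hi0⟩ := Fintype.card_eq_one_iff.1 h1
      have ext1 : ∀ z z' : (∀ r : {r // r ∈ P}, ∀ i : {i // f i = r}, ZMod (r.1 ^ e i.1.1)), 2 • z = 0 → 2 • z' = 0 → z r₂ i0 = z' r₂ i0 → z = z' := by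
        intro z z' hz hz' hc
        refine ext2 z z' hz hz' ?_
        funext j
        rw [hi0 j]
        exact hc
      have d1 : X r₂ i0 ≠ Y r₂ i0 := fun h => hxy3 (ext1 _ _ hx3 hy3 h)
      have d2 : X r₂ i0 ≠ (X + Y) r₂ i0 := by
        intro h
        have := ext1 _ _ hx3 hZ h
        exact hy30 (by
          have := (left_eq_add (a := X)).1 this
          exact this)
      have d3 : Y r₂ i0 ≠ (X + Y) r₂ i0 := by
        intro h
        have := ext1 _ _ hy3 hZ h
        refine hx30 ?_
        have h2 : Y = Y + (X + Y) - (X + Y) := by abel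
        calc X = X + Y - Y := by abel
        _ = 0 := by rw [← this]; abel
      -- component values
      have cX : 2 • (X r₂ i0) = 0 := by
        have h := congrFun (congrFun hx3 r₂) i0
        rwa [Pi.smul_apply, Pi.smul_apply, Pi.zero_apply] at h
      have cY : 2 • (Y r₂ i0) = 0 := by
        have h := congrFun (congrFun hy3 r₂) i0
        rwa [Pi.smul_apply, Pi.smul_apply, Pi.zero_apply] at h
      have cZ : 2 • ((X + Y) r₂ i0) = 0 := by
        have h := congrFun (congrFun hZ r₂) i0
        rwa [Pi.smul_apply, Pi.smul_apply, Pi.zero_apply] at h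
      have vX := two_nsmul_zmod_val (hw r₂ i0) cX
      have vY := two_nsmul_zmod_val (hw r₂ i0) cY
      have vZ := two_nsmul_zmod_val (hw r₂ i0) cZ
      haveI : NeZero ((2:ℕ) ^ e i0.1.1) := ⟨pow_ne_zero _ two_ne_zero⟩
      have dv1 : (X r₂ i0).val ≠ (Y r₂ i0).val := fun h => d1 (zmod_val_inj h)
      have dv2 : (X r₂ i0).val ≠ ((X + Y) r₂ i0).val := fun h => d2 (zmod_val_inj h)
      have dv3 : (Y r₂ i0).val ≠ ((X + Y) r₂ i0).val := fun h => d3 (zmod_val_inj h)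
      omega
  -- if there are three factors above 2, one of them is `ZMod 2`
  have minexp : Nat.card {i // f i = r₂} = 3 → ∃ i : {i // f i = r₂}, e i.1.1 = 1 := by
    intro h3
    by_contra hno
    push_neg at hno
    have h2le : ∀ i : {i // f i = r₂}, 2 ≤ e i.1.1 := fun i => by
      have h1 := hw r₂ i
      have h2 := hno i
      omega
    have hψs : ψ r₂ (Ψ3 s) = 0 := by
      funext i
      rw [hψapp]
      have hzc : 2 • ((Ψ3 s) r₂ i) = 0 := by
        have h := congrFun (congrFun hs3 r₂) i
        rwa [Pi.smul_apply, Pi.smul_apply, Pi.zero_apply] at h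
      exact cast_eq_zero_of_two_nsmul (h2le i) hzc _
    have := quot_le2 r₂ hψs
    omega
  -- sort and pad the exponents for each prime
  choose E hEmono hE0iff hEmin hEquiv using fun r : {r // r ∈ P} =>
    key r.1 (fun i : {i // f i = r} => e i.1.1) (count_le3 r) (hw r)
  have Ψ4 : A ≃+ ∀ r : {r // r ∈ P}, ∀ j : Fin 3, ZMod (r.1 ^ E r j) :=
    Ψ3.trans (AddEquiv.piCongrRight fun r => (hEquiv r).some)
  have Ψ5 : A ≃+ ∀ j : Fin 3, ∀ r : {r // r ∈ P}, ZMod (r.1 ^ E r j) :=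
    Ψ4.trans (piCommAdd (fun r j => ZMod (r.1 ^ E r j)))
  have coprime : ∀ j : Fin 3,
      Pairwise (Function.onFun Nat.Coprime fun r : {r // r ∈ P} => r.1 ^ E r j) := by
    intro j r r' hne
    exact Nat.Coprime.pow _ _
      ((Nat.coprime_primes (hPprime r) (hPprime r')).2 fun h => hne (Subtype.ext h))
  set D : Fin 3 → ℕ := fun j => ∏ r : {r // r ∈ P}, r.1 ^ E r j with hDdef
  have Ψ6 : A ≃+ ∀ j : Fin 3, ZMod (D j) :=
    Ψ5.trans (AddEquiv.piCongrRight fun j => (ZMod.prodEquivPi _ (coprime j)).symm.toAddEquiv)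
  have Ψ7 : A ≃+ ZMod (D 0) × ZMod (D 1) × ZMod (D 2) :=
    Ψ6.trans (piFin3 (fun j => ZMod (D j)))
  have hDpos : ∀ j, 0 < D j := fun j => Finset.prod_pos fun r _ => pow_pos (hPprime r).pos _
  have hD01 : D 0 ∣ D 1 :=
    Finset.prod_dvd_prod_of_dvd _ _ fun r _ => pow_dvd_pow _ (hEmono r (by decide))
  have hD12 : D 1 ∣ D 2 :=
    Finset.prod_dvd_prod_of_dvd _ _ fun r _ => pow_dvd_pow _ (hEmono r (by decide))
  have hE21 : E r₂ 1 ≠ 0 := by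
    intro h
    have h2 := (hE0iff r₂ 1).1 h
    have hv : ((1 : Fin 3) : ℕ) = 1 := rfl
    omega
  have hD1even : 2 ∣ D 1 := by
    refine dvd_trans (dvd_pow_self r₂.1 hE21) ?_
    exact Finset.dvd_prod_of_mem _ (Finset.mem_univ r₂)
  have hD0val : D 0 = 2 ^ E r₂ 0 := by
    refine Finset.prod_eq_single r₂ ?_ ?_
    · intro r _ hne
      have hE0 : E r 0 = 0 := by
        refine (hE0iff r 0).2 ?_
        have := count_le2 r hne
        have hv : ((0 : Fin 3) : ℕ) = 0 := rfl
        omega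
      rw [hE0, pow_zero]
    · intro h
      exact absurd (Finset.mem_univ r₂) h
  have hD0 : D 0 = 1 ∨ D 0 = 2 := by
    have hv0 : ((0 : Fin 3) : ℕ) = 0 := rfl
    rcases Nat.lt_or_ge (Nat.card {i // f i = r₂}) 3 with hc | hc
    · left
      have hE20 : E r₂ 0 = 0 := (hE0iff r₂ 0).2 (by omega)
      rw [hD0val, hE20, pow_zero]
    · right
      have hc3 : Nat.card {i // f i = r₂} = 3 := le_antisymm (count_le3 r₂) hc
      obtain ⟨i1, hi1⟩ := minexp hc3
      have hne : E r₂ 0 ≠ 0 := by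
        intro h
        have := (hE0iff r₂ 0).1 h
        omega
      have hle1 : E r₂ 0 ≤ 1 := by
        have h2 := hEmin r₂ hc3 i1
        rw [hi1] at h2
        exact h2
      have hE1 : E r₂ 0 = 1 := by omega
      rw [hD0val, hE1, pow_one]
  refine ⟨D 1 / 2, D 2 / D 1, ?_, ?_, ?_⟩
  · have hm : 2 * (D 1 / 2) = D 1 := Nat.mul_div_cancel' hD1even
    have := hDpos 1
    omega
  · have hn : D 1 * (D 2 / D 1) = D 2 := Nat.mul_div_cancel' hD12
    have := hDpos 2
    have := hDpos 1
    rcases Nat.eq_zero_or_pos (D 2 / D 1) with h | h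
    · rw [h, mul_zero] at hn; omega
    · exact h
  have hm : 2 * (D 1 / 2) = D 1 := Nat.mul_div_cancel' hD1even
  have hn : 2 * (D 1 / 2) * (D 2 / D 1) = D 2 := by
    rw [hm]
    exact Nat.mul_div_cancel' hD12
  rcases hD0 with h1 | h2
  · haveI : Unique (ZMod (D 0)) := (zmodCongr h1).toEquiv.unique
    exact Or.inl ⟨(Ψ7.trans AddEquiv.uniqueProd).trans
      (AddEquiv.prodCongr (zmodCongr hm.symm) (zmodCongr hn.symm))⟩
  · exact Or.inr ⟨Ψ7.trans (AddEquiv.prodCongr (zmodCongr h2)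
      (AddEquiv.prodCongr (zmodCongr hm.symm) (zmodCongr hn.symm)))⟩

end ATGC

open ATGC in
/-- A finite abelian group generated by three elements, one of order `2`, containing
a Klein four subgroup, is isomorphic to `ℤ/2m × ℤ/2mn` or `ℤ/2 × ℤ/2m × ℤ/2mn`. -/
theorem abelian_three_generators_classification
    {G : Type*} [CommGroup G] [Finite G] (a b s : G) (hs : orderOf s = 2)
    (hgen : Subgroup.closure {a, b, s} = ⊤)
    (H : Subgroup G) (hH : Nonempty (H ≃* Multiplicative (ZMod 2 × ZMod 2))) :
    ∃ m n : ℕ, 0 < m ∧ 0 < n ∧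
      (Nonempty (G ≃* Multiplicative (ZMod (2 * m) × ZMod (2 * m * n))) ∨
       Nonempty (G ≃* Multiplicative (ZMod 2 × ZMod (2 * m) × ZMod (2 * m * n)))) := by
  obtain ⟨eqv⟩ := hH
  set g₁ : Multiplicative (ZMod 2 × ZMod 2) :=
    Multiplicative.ofAdd ((1 : ZMod 2), (0 : ZMod 2)) with hg₁
  set g₂ : Multiplicative (ZMod 2 × ZMod 2) :=
    Multiplicative.ofAdd ((0 : ZMod 2), (1 : ZMod 2)) with hg₂
  set u : H := eqv.symm g₁ with hu
  set v : H := eqv.symm g₂ with hv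
  set x : G := (u : G) with hxdef
  set y : G := (v : G) with hydef
  have hxx : x * x = 1 := by
    have h1 : u * u = 1 := by rw [hu, ← map_mul, (by decide : g₁ * g₁ = 1), map_one]
    calc x * x = ((u * u : H) : G) := rfl
      _ = 1 := by rw [h1]; rfl
  have hyy : y * y = 1 := by
    have h1 : v * v = 1 := by rw [hv, ← map_mul, (by decide : g₂ * g₂ = 1), map_one]
    calc y * y = ((v * v : H) : G) := rfl
      _ = 1 := by rw [h1]; rfl
  have hx1 : x ≠ 1 := by
    intro h
    have h1 : u = 1 := Subtype.ext (by rw [hxdef] at h; exact h)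
    have h2 : g₁ = 1 := by
      have := congrArg eqv h1
      rwa [hu, MulEquiv.apply_symm_apply, map_one] at this
    exact absurd h2 (by decide)
  have hy1 : y ≠ 1 := by
    intro h
    have h1 : v = 1 := Subtype.ext (by rw [hydef] at h; exact h)
    have h2 : g₂ = 1 := by
      have := congrArg eqv h1
      rwa [hv, MulEquiv.apply_symm_apply, map_one] at this
    exact absurd h2 (by decide)
  have hxyne : x ≠ y := by
    intro h
    have h1 : u = v := Subtype.ext (by rw [hxdef, hydef] at h; exact h)
    have h2 : g₁ = g₂ := by
      have := congrArg eqv h1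
      rwa [hu, hv, MulEquiv.apply_symm_apply, MulEquiv.apply_symm_apply] at this
    exact absurd h2 (by decide)
  have hss : s ^ 2 = 1 := by rw [← hs]; exact pow_orderOf_eq_one s
  -- pass to the additive group
  have hgenA : AddSubgroup.closure
      ({Additive.ofMul a, Additive.ofMul b, Additive.ofMul s} : Set (Additive G)) = ⊤ := by
    rw [eq_top_iff]
    intro z _
    have hz : Additive.toMul z ∈ Subgroup.closure ({a, b, s} : Set G) := by rw [hgen]; trivial
    exact Subgroup.closure_induction
      (p := fun g _ => Additive.ofMul g ∈ AddSubgroup.closure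
        ({Additive.ofMul a, Additive.ofMul b, Additive.ofMul s} : Set (Additive G)))
      (fun g hg => AddSubgroup.subset_closure (by
        simp only [Set.mem_insert_iff, Set.mem_singleton_iff] at hg ⊢
        rcases hg with rfl | rfl | rfl
        · exact Or.inl rfl
        · exact Or.inr (Or.inl rfl)
        · exact Or.inr (Or.inr rfl)))
      (AddSubgroup.zero_mem _)
      (fun g h _ _ hg hh => AddSubgroup.add_mem _ hg hh)
      (fun g _ hg => AddSubgroup.neg_mem _ hg)
      hz
  have hsA : 2 • Additive.ofMul s = 0 := by rw [← ofMul_pow, hss]; rfl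
  have hxA : 2 • Additive.ofMul x = 0 := by rw [← ofMul_pow, pow_two, hxx]; rfl
  have hyA : 2 • Additive.ofMul y = 0 := by rw [← ofMul_pow, pow_two, hyy]; rfl
  have hx0 : Additive.ofMul x ≠ 0 := fun h => hx1 (Additive.ofMul.injective h)
  have hy0 : Additive.ofMul y ≠ 0 := fun h => hy1 (Additive.ofMul.injective h)
  have hxy0 : Additive.ofMul x ≠ Additive.ofMul y := fun h => hxyne (Additive.ofMul.injective h)
  obtain ⟨m, n, hm, hn, hiso⟩ := core (Additive.ofMul a) (Additive.ofMul b) (Additive.ofMul s)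
    (Additive.ofMul x) (Additive.ofMul y) hgenA hsA hxA hyA hx0 hy0 hxy0
  refine ⟨m, n, hm, hn, ?_⟩
  rcases hiso with h | h
  · obtain ⟨Φ⟩ := h
    exact Or.inl ⟨AddEquiv.toMultiplicativeRight Φ⟩
  · obtain ⟨Φ⟩ := h
    exact Or.inr ⟨AddEquiv.toMultiplicativeRight Φ⟩
end
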